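/- Let ℓ be a natural number, let p ≥ 1 be a real number, and let d_0 ≤ d_1 ≤ ⋯ ≤ d_ℓ be nonnegative real numbers with d_i ≤ 2^i for every i ∈ {0, …, ℓ}. Then d_ℓ^p ≤ p·d_0 + ∑_{i=1}^{ℓ} p·2^{i(p−1)}·(d_i − d_{i−1}). -/

import Mathlib

open Real

/-- Key step: for `0 ≤ y ≤ x`, `x^p - y^p ≤ p * x^(p-1) * (x - y)`. -/
lemma key_step {x y p : ℝ} (hp : 1 ≤ p) (hy : 0 ≤ y) (hxy : y ≤ x) :
    x ^ p - y ^ p ≤ p * x ^ (p - 1) * (x - y) := by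
  have hx : 0 ≤ x := hy.trans hxy
  rcases eq_or_lt_of_le hx with hx0 | hx0
  · have : y = 0 := le_antisymm (hxy.trans hx0.symm.le) hy
    simp [this, ← hx0]
  · set s : ℝ := y / x - 1 with hs
    have hs1 : -1 ≤ s := by
      have : 0 ≤ y / x := div_nonneg hy hx
      simp [hs]; linarith
    have hb := one_add_mul_self_le_rpow_one_add hs1 hp
    have h1s : 1 + s = y / x := by simp [hs]
    rw [h1s] at hb
    have hxp : 0 < x ^ p := Real.rpow_pos_of_pos hx0 p
    have hdiv : (y / x) ^ p = y ^ p / x ^ p := Real.div_rpow hy hx p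
    -- multiply Bernoulli by x^p
    have hmul : (1 + p * s) * x ^ p ≤ y ^ p := by
      calc (1 + p * s) * x ^ p ≤ (y / x) ^ p * x ^ p := by
            exact mul_le_mul_of_nonneg_right hb hxp.le
        _ = y ^ p := by rw [hdiv]; field_simp
    have hps : x ^ p * s = x ^ (p - 1) * (y - x) := by
      rw [hs, Real.rpow_sub hx0]
      field_simp
      simp only [Real.rpow_one, pow_one]; ring
    nlinarith [hmul, hps]

theorem stmt_2 (ℓ : ℕ) (p : ℝ) (hp : 1 ≤ p) (d : ℕ → ℝ)
    (hnn : ∀ i ≤ ℓ, 0 ≤ d i)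
    (hmono : ∀ i < ℓ, d i ≤ d (i + 1))
    (hcap : ∀ i ≤ ℓ, d i ≤ 2 ^ i) :
    d ℓ ^ p ≤ p * d 0 +
      ∑ i ∈ Finset.Icc 1 ℓ, p * (2 : ℝ) ^ ((i : ℝ) * (p - 1)) * (d i - d (i - 1)) := by
  induction ℓ with
  | zero =>
      simp only [Finset.Icc_self, Finset.Icc_eq_empty_of_lt (by norm_num : (1:ℕ) > 0)]
      have h0 : 0 ≤ d 0 := hnn 0 le_rfl
      have h1 : d 0 ≤ 1 := by simpa using hcap 0 le_rfl
      have hdp : d 0 ^ p ≤ d 0 := by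
        rcases eq_or_lt_of_le h0 with h | h
        · rw [← h, Real.zero_rpow (by linarith)]
        · calc d 0 ^ p ≤ d 0 ^ (1:ℝ) :=
                Real.rpow_le_rpow_of_exponent_ge h h1 hp
            _ = d 0 := Real.rpow_one _
      have : d 0 ≤ p * d 0 := le_mul_of_one_le_left h0 hp
      simp only [Finset.sum_empty]
      linarith
  | succ n ih =>
      have hsum : ∑ i ∈ Finset.Icc 1 (n+1),
          p * (2 : ℝ) ^ ((i : ℝ) * (p - 1)) * (d i - d (i - 1))
          = (∑ i ∈ Finset.Icc 1 n, p * (2 : ℝ) ^ ((i : ℝ) * (p - 1)) * (d i - d (i - 1)))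
            + p * (2 : ℝ) ^ (((n+1 : ℕ) : ℝ) * (p - 1)) * (d (n+1) - d n) := by
        rw [Finset.sum_Icc_succ_top (by omega : 1 ≤ n + 1)]
        norm_num
      have hih := ih (fun i hi => hnn i (by omega)) (fun i hi => hmono i (by omega))
        (fun i hi => hcap i (by omega))
      have hdn : 0 ≤ d n := hnn n (by omega)
      have hmn : d n ≤ d (n+1) := hmono n (by omega)
      have hkey := key_step hp hdn hmn
      -- bound x^(p-1) by 2^((n+1)(p-1))
      have hcap' : d (n+1) ≤ 2 ^ (n+1) := hcap (n+1) le_rfl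
      have hbnd : d (n+1) ^ (p - 1) ≤ (2:ℝ) ^ (((n+1 : ℕ) : ℝ) * (p - 1)) := by
        have h2 : ((2:ℝ) ^ (n+1) : ℝ) ^ (p-1) = (2:ℝ) ^ (((n+1 : ℕ) : ℝ) * (p - 1)) := by
          rw [← Real.rpow_natCast 2 (n+1), ← Real.rpow_mul (by norm_num)]
        rw [← h2]
        exact Real.rpow_le_rpow (hdn.trans hmn) hcap' (by linarith)
      have hstep : d (n+1) ^ p ≤ d n ^ p
          + p * (2:ℝ) ^ (((n+1 : ℕ) : ℝ) * (p - 1)) * (d (n+1) - d n) := by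
        have h1 : p * d (n+1) ^ (p-1) * (d (n+1) - d n)
            ≤ p * (2:ℝ) ^ (((n+1 : ℕ) : ℝ) * (p - 1)) * (d (n+1) - d n) := by
          apply mul_le_mul_of_nonneg_right _ (by linarith)
          exact mul_le_mul_of_nonneg_left hbnd (by linarith)
        linarith [hkey]
      rw [hsum]
      push_cast at hstep ⊢
      linarith
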